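/- For the noisy-data iteration ξ_{n+1}^δ = ξₙ^δ - tₙ^δ A*(αₙ I + AA*)^{-1}(Axₙ^δ - y^δ), xₙ^δ = ∇Θ*(ξₙ^δ), with ‖y^δ - y‖ ≤ δ, step sizes tₙ^δ given by the min-rule with 0 < μ₀ < 4c₀(1 - 1/τ) and μ₁ > 0 (τ > 1), assume that for all n < m the stopping test fails, i.e. √(αₙ)‖(αₙ I + AA*)^{-1/2}(Axₙ^δ - y^δ)‖ > τδ. Then for every solution x̂ of Ax = y in dom(Θ) and every 0 ≤ n < m: D_{ξ_{n+1}^δ}Θ(x̂, x_{n+1}^δ) - D_{ξₙ^δ}Θ(x̂, xₙ^δ) ≤ -(1 - 1/τ - μ₀/(4c₀)) tₙ^δ ‖(αₙ I + AA*)^{-1/2}(Axₙ^δ - y^δ)‖² ≤ 0. -/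

import Mathlib

open scoped InnerProductSpace
open ContinuousLinearMap

/-- Quadratic growth of `Θ(·) − ⟪ξ,·⟫` at its minimizer, from strong convexity. -/
lemma aux_growth {X : Type*} [NormedAddCommGroup X] [InnerProductSpace ℝ X]
    (Θ : X → EReal) (c₀ : ℝ)
    (hbot : ∀ z, Θ z ≠ ⊥)
    (hsc : ∀ (z x : X) (s : ℝ), 0 ≤ s → s ≤ 1 →
      Θ (s • z + (1 - s) • x) + ((c₀ * s * (1 - s) * ‖z - x‖ ^ 2 : ℝ) : EReal)
        ≤ (s : EReal) * Θ z + ((1 - s : ℝ) : EReal) * Θ x)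
    (ξ : X) (x z : X)
    (hargmin : ∀ u : X,
      Θ x - ((⟪ξ, x⟫_ℝ : ℝ) : EReal) ≤ Θ u - ((⟪ξ, u⟫_ℝ : ℝ) : EReal))
    (θx θz : ℝ) (hθx : Θ x = (θx : EReal)) (hθz : Θ z = (θz : EReal)) :
    ⟪ξ, z - x⟫_ℝ + c₀ * ‖z - x‖ ^ 2 ≤ θz - θx := by
  have key : ∀ s : ℝ, 0 < s → s ≤ 1 →
      ⟪ξ, z - x⟫_ℝ + c₀ * (1 - s) * ‖z - x‖ ^ 2 ≤ θz - θx := by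
    intro s hs hs1
    set u := s • z + (1 - s) • x with hu
    have hconv : Θ u + ((c₀ * s * (1 - s) * ‖z - x‖ ^ 2 : ℝ) : EReal)
        ≤ ((s * θz + (1 - s) * θx : ℝ) : EReal) := by
      have := hsc z x s hs.le hs1
      rw [hθx, hθz] at this
      rw [← hu] at this
      calc Θ u + ((c₀ * s * (1 - s) * ‖z - x‖ ^ 2 : ℝ) : EReal)
          ≤ (s : EReal) * (θz : EReal) + ((1 - s : ℝ) : EReal) * (θx : EReal) := this
        _ = ((s * θz + (1 - s) * θx : ℝ) : EReal) := by
            rw [← EReal.coe_mul, ← EReal.coe_mul, ← EReal.coe_add]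
    -- Θ u is finite
    have hutop : Θ u ≠ ⊤ := by
      intro h
      rw [h, EReal.top_add_coe] at hconv
      exact (EReal.coe_lt_top _).not_ge hconv
    set θu := (Θ u).toReal with hθu
    have hθueq : Θ u = (θu : EReal) := (EReal.coe_toReal hutop (hbot u)).symm
    rw [hθueq, ← EReal.coe_add, EReal.coe_le_coe_iff] at hconv
    -- argmin inequality, real form
    have harg := hargmin u
    rw [hθx, hθueq, ← EReal.coe_sub, ← EReal.coe_sub, EReal.coe_le_coe_iff] at harg
    have hinner : ⟪ξ, u⟫_ℝ = s * ⟪ξ, z⟫_ℝ + (1 - s) * ⟪ξ, x⟫_ℝ := by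
      rw [hu, inner_add_right, inner_smul_right, inner_smul_right]
    have hzx : ⟪ξ, z - x⟫_ℝ = ⟪ξ, z⟫_ℝ - ⟪ξ, x⟫_ℝ := inner_sub_right ξ z x
    -- combine: θx + s⟪ξ,z-x⟫ ≤ θu ≤ sθz + (1-s)θx - c₀ s(1-s)‖z-x‖²
    have hcomb : s * ⟪ξ, z - x⟫_ℝ + c₀ * s * (1 - s) * ‖z - x‖ ^ 2
        ≤ s * (θz - θx) := by nlinarith [harg, hconv]
    have := (mul_le_mul_iff_right₀ hs).mp (by nlinarith [hcomb] :
      s * (⟪ξ, z - x⟫_ℝ + c₀ * (1 - s) * ‖z - x‖ ^ 2) ≤ s * (θz - θx))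
    linarith
  refine le_of_forall_pos_le_add fun ε hε => ?_
  set K := c₀ * ‖z - x‖ ^ 2 with hK
  have hK1 : 0 < |K| + 1 := by positivity
  set s : ℝ := min 1 (ε / (|K| + 1)) with hsdef
  have hs0 : 0 < s := lt_min one_pos (div_pos hε hK1)
  have hs1 : s ≤ 1 := min_le_left _ _
  have hsK : s * K ≤ ε := by
    have h1 : s ≤ ε / (|K| + 1) := min_le_right _ _
    have h2 : s * K ≤ s * (|K| + 1) := by
      have : K ≤ |K| + 1 := (le_abs_self K).trans (by linarith)
      nlinarith
    have h3 : s * (|K| + 1) ≤ ε := by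
      rw [← div_mul_cancel₀ ε (ne_of_gt hK1)]
      exact mul_le_mul_of_nonneg_right h1 hK1.le
    linarith
  have := key s hs0 hs1
  have hexp : c₀ * (1 - s) * ‖z - x‖ ^ 2 = K - s * K := by ring
  rw [hexp] at this
  linarith

open scoped InnerProductSpace
open ContinuousLinearMap

set_option maxHeartbeats 1000000 in
theorem noisy_iteration_bregman_monotone
    {X Y : Type*} [NormedAddCommGroup X] [InnerProductSpace ℝ X] [CompleteSpace X]
    [NormedAddCommGroup Y] [InnerProductSpace ℝ Y] [CompleteSpace Y]
    (Θ : X → EReal) (c₀ : ℝ) (hc₀ : 0 < c₀)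
    (hproper : (∀ z, Θ z ≠ ⊥) ∧ ∃ z, Θ z ≠ ⊤)
    (hlsc : LowerSemicontinuous Θ)
    (hsc : ∀ (z x : X) (s : ℝ), 0 ≤ s → s ≤ 1 →
      Θ (s • z + (1 - s) • x) + ((c₀ * s * (1 - s) * ‖z - x‖ ^ 2 : ℝ) : EReal)
        ≤ (s : EReal) * Θ z + ((1 - s : ℝ) : EReal) * Θ x)
    (A : X →L[ℝ] Y) (y yδ : Y) (δ : ℝ) (hδ : 0 < δ) (hnoise : ‖yδ - y‖ ≤ δ)
    (τ : ℝ) (hτ : 1 < τ)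
    (α : ℕ → ℝ) (hαpos : ∀ n, 0 < α n) (hαdec : ∀ n, α (n + 1) ≤ α n)
    (S B : ℕ → (Y →L[ℝ] Y))
    (hSsa : ∀ n, IsSelfAdjoint (S n))
    (hSpos : ∀ n, ∀ w : Y, 0 ≤ ⟪S n w, w⟫_ℝ)
    (hSsq : ∀ n, S n ∘L S n = α n • (1 : Y →L[ℝ] Y) + A ∘L ContinuousLinearMap.adjoint A)
    (hBS : ∀ n, B n ∘L S n = 1) (hSB : ∀ n, S n ∘L B n = 1)
    (μ₀ μ₁ : ℝ) (hμ₀ : 0 < μ₀) (hμ₀' : μ₀ < 4 * c₀ * (1 - 1 / τ)) (hμ₁ : 0 < μ₁)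
    (ξ x : ℕ → X) (t : ℕ → ℝ)
    (hargmin : ∀ n, ∀ z : X,
      Θ (x n) - ((⟪ξ n, x n⟫_ℝ : ℝ) : EReal) ≤ Θ z - ((⟪ξ n, z⟫_ℝ : ℝ) : EReal))
    (ht : ∀ n, t n = min (μ₀ * ⟪B n (B n (A (x n) - yδ)), A (x n) - yδ⟫_ℝ /
      ‖ContinuousLinearMap.adjoint A (B n (B n (A (x n) - yδ)))‖ ^ 2) μ₁)
    (hiter : ∀ n, ξ (n + 1)
      = ξ n - t n • ContinuousLinearMap.adjoint A (B n (B n (A (x n) - yδ))))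
    (m : ℕ)
    (hfail : ∀ n < m, τ * δ < Real.sqrt (α n) * ‖B n (A (x n) - yδ)‖) :
    ∀ (xhat : X), A xhat = y → Θ xhat ≠ ⊤ → ∀ n < m,
      0 ≤ (1 - 1 / τ - μ₀ / (4 * c₀)) * t n * ‖B n (A (x n) - yδ)‖ ^ 2 ∧
      (Θ xhat - Θ (x (n + 1)) - ((⟪ξ (n + 1), xhat - x (n + 1)⟫_ℝ : ℝ) : EReal))
          + (((1 - 1 / τ - μ₀ / (4 * c₀)) * t n * ‖B n (A (x n) - yδ)‖ ^ 2 : ℝ) : EReal)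
        ≤ Θ xhat - Θ (x n) - ((⟪ξ n, xhat - x n⟫_ℝ : ℝ) : EReal) := by
  intro xhat hAxhat hxhattop n hn
  have hτ0 : 0 < τ := lt_trans one_pos hτ
  -- notation
  set r : Y := A (x n) - yδ with hr
  set w : X := ContinuousLinearMap.adjoint A (B n (B n r)) with hw
  -- operator facts
  have hSBv : ∀ v : Y, S n (B n v) = v := fun v => by
    have := DFunLike.congr_fun (hSB n) v
    simpa using this
  have hBSv : ∀ v : Y, B n (S n v) = v := fun v => by
    have := DFunLike.congr_fun (hBS n) v
    simpa using this
  have hSself : ∀ u v : Y, ⟪S n u, v⟫_ℝ = ⟪u, S n v⟫_ℝ := fun u v => by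
    have h := (isSelfAdjoint_iff'.mp (hSsa n))
    conv_lhs => rw [← h]
    exact ContinuousLinearMap.adjoint_inner_left (S n) v u
  have hBself : ∀ u v : Y, ⟪B n u, v⟫_ℝ = ⟪u, B n v⟫_ℝ := fun u v => by
    calc ⟪B n u, v⟫_ℝ = ⟪B n u, S n (B n v)⟫_ℝ := by rw [hSBv]
      _ = ⟪S n (B n u), B n v⟫_ℝ := (hSself _ _).symm
      _ = ⟪u, B n v⟫_ℝ := by rw [hSBv]
  -- ‖B v‖ bound
  have hnormB : ∀ v : Y, Real.sqrt (α n) * ‖B n v‖ ≤ ‖v‖ := by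
    intro v
    have h1 : ‖S n (B n v)‖ ^ 2 = α n * ‖B n v‖ ^ 2
        + ‖ContinuousLinearMap.adjoint A (B n v)‖ ^ 2 := by
      set u := B n v
      have h2 : ⟪S n u, S n u⟫_ℝ = ⟪(S n ∘L S n) u, u⟫_ℝ := by
        rw [ContinuousLinearMap.comp_apply]; exact (hSself (S n u) u).symm
      rw [← real_inner_self_eq_norm_sq, h2, hSsq n]
      simp only [ContinuousLinearMap.add_apply, ContinuousLinearMap.smul_apply,
        ContinuousLinearMap.one_apply, ContinuousLinearMap.comp_apply]
      rw [inner_add_left, real_inner_smul_left, real_inner_self_eq_norm_sq]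
      have h3 : ⟪A (ContinuousLinearMap.adjoint A u), u⟫_ℝ
          = ‖ContinuousLinearMap.adjoint A u‖ ^ 2 := by
        rw [← ContinuousLinearMap.adjoint_inner_right A
          (ContinuousLinearMap.adjoint A u) u, real_inner_self_eq_norm_sq]
      rw [h3]
    rw [hSBv] at h1
    have h4 : (Real.sqrt (α n) * ‖B n v‖) ^ 2 ≤ ‖v‖ ^ 2 := by
      rw [mul_pow, Real.sq_sqrt (hαpos n).le, h1]
      nlinarith [sq_nonneg ‖ContinuousLinearMap.adjoint A (B n v)‖]
    have h5 : 0 ≤ Real.sqrt (α n) * ‖B n v‖ := by positivity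
    nlinarith [norm_nonneg v]
  -- key inner product identities
  have hBr2 : ⟪B n (B n r), r⟫_ℝ = ‖B n r‖ ^ 2 := by
    rw [hBself, real_inner_self_eq_norm_sq]
  have hwx : ∀ v : X, ⟪w, v⟫_ℝ = ⟪B n r, B n (A v)⟫_ℝ := fun v => by
    rw [hw, adjoint_inner_left, hBself]
  have hAsub : A (xhat - x n) = (y - yδ) - r := by
    rw [map_sub A xhat (x n), hAxhat, hr]; abel
  have hwxhat : ⟪w, xhat - x n⟫_ℝ = ⟪B n r, B n (y - yδ)⟫_ℝ - ‖B n r‖ ^ 2 := by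
    rw [hwx (xhat - x n), hAsub, map_sub (B n) (y - yδ) r, inner_sub_right,
      real_inner_self_eq_norm_sq]
  -- step-size facts
  have ht0 : 0 ≤ t n := by
    rw [ht n, ← hr]
    refine le_min (div_nonneg ?_ (by positivity)) hμ₁.le
    rw [hBr2]; positivity
  have htw : t n * ‖w‖ ^ 2 ≤ μ₀ * ‖B n r‖ ^ 2 := by
    by_cases hw0 : ‖w‖ = 0
    · rw [hw0]; simp; positivity
    · have hwpos : (0:ℝ) < ‖w‖ ^ 2 := by positivity
      have h1 : t n ≤ μ₀ * ‖B n r‖ ^ 2 / ‖w‖ ^ 2 := by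
        rw [ht n, ← hr, hBr2, ← hw]; exact min_le_left _ _
      calc t n * ‖w‖ ^ 2 ≤ (μ₀ * ‖B n r‖ ^ 2 / ‖w‖ ^ 2) * ‖w‖ ^ 2 :=
            mul_le_mul_of_nonneg_right h1 hwpos.le
        _ = μ₀ * ‖B n r‖ ^ 2 := div_mul_cancel₀ _ (ne_of_gt hwpos)
  -- noise bounds
  have hsα : 0 < Real.sqrt (α n) := Real.sqrt_pos.mpr (hαpos n)
  have hnB : Real.sqrt (α n) * ‖B n (y - yδ)‖ ≤ δ := by
    calc Real.sqrt (α n) * ‖B n (y - yδ)‖ ≤ ‖y - yδ‖ := hnormB _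
      _ = ‖yδ - y‖ := norm_sub_rev _ _
      _ ≤ δ := hnoise
  have hfailn : τ * δ < Real.sqrt (α n) * ‖B n r‖ := hfail n hn
  have hBrpos : 0 < ‖B n r‖ := by
    nlinarith [mul_pos hτ0 hδ, hsα, norm_nonneg (B n r)]
  have hnoiseBr : ⟪B n r, B n (y - yδ)⟫_ℝ ≤ ‖B n r‖ ^ 2 / τ := by
    have hcs : ⟪B n r, B n (y - yδ)⟫_ℝ ≤ ‖B n r‖ * ‖B n (y - yδ)‖ :=
      real_inner_le_norm _ _
    have h1 : ‖B n (y - yδ)‖ ≤ δ / Real.sqrt (α n) := by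
      rw [le_div_iff₀ hsα]; linarith [hnB]
    have h2 : δ / Real.sqrt (α n) ≤ ‖B n r‖ / τ := by
      rw [div_le_div_iff₀ hsα hτ0]; nlinarith
    have h3 : ‖B n r‖ * ‖B n (y - yδ)‖ ≤ ‖B n r‖ * (‖B n r‖ / τ) :=
      mul_le_mul_of_nonneg_left (h1.trans h2) hBrpos.le
    calc ⟪B n r, B n (y - yδ)⟫_ℝ ≤ ‖B n r‖ * (‖B n r‖ / τ) := hcs.trans h3
      _ = ‖B n r‖ ^ 2 / τ := by ring
  -- finiteness of Θ values
  have hbot := hproper.1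
  set θhat := (Θ xhat).toReal with hθhatdef
  have hθhat : Θ xhat = (θhat : EReal) := (EReal.coe_toReal hxhattop (hbot xhat)).symm
  have hfin : ∀ k : ℕ, Θ (x k) ≠ ⊤ := by
    intro k hk
    have h := hargmin k xhat
    rw [hθhat, hk, EReal.top_sub_coe, ← EReal.coe_sub] at h
    exact (EReal.coe_lt_top _).not_ge h
  set θn := (Θ (x n)).toReal with hθndef
  set θn1 := (Θ (x (n + 1))).toReal with hθn1def
  have hθn : Θ (x n) = (θn : EReal) := (EReal.coe_toReal (hfin n) (hbot _)).symm
  have hθn1 : Θ (x (n + 1)) = (θn1 : EReal) := (EReal.coe_toReal (hfin (n + 1)) (hbot _)).symm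
  -- growth at the argmin x n, evaluated at x (n+1)
  have hgrow : ⟪ξ n, x (n + 1) - x n⟫_ℝ + c₀ * ‖x (n + 1) - x n‖ ^ 2 ≤ θn1 - θn :=
    aux_growth Θ c₀ hbot hsc (ξ n) (x n) (x (n + 1)) (hargmin n) θn θn1 hθn hθn1
  -- coefficient positivity
  have hcoef : 0 < 1 - 1 / τ - μ₀ / (4 * c₀) := by
    have h1 : μ₀ / (4 * c₀) < 1 - 1 / τ := by
      rw [div_lt_iff₀ (by positivity)]; linarith [hμ₀']
    linarith
  constructor
  · positivity
  -- main inequality: reduce to reals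
  · have hξ1 : ξ (n + 1) = ξ n - t n • w := by rw [hiter n, ← hr, ← hw]
    have hinner1 : ⟪ξ (n + 1), xhat - x (n + 1)⟫_ℝ
        = ⟪ξ n, xhat - x (n + 1)⟫_ℝ - t n * ⟪w, xhat - x (n + 1)⟫_ℝ := by
      rw [hξ1, inner_sub_left, real_inner_smul_left]
    rw [hθhat, hθn, hθn1, ← EReal.coe_sub, ← EReal.coe_sub, ← EReal.coe_sub,
      ← EReal.coe_sub, ← EReal.coe_add, EReal.coe_le_coe_iff]
    -- now a real inequality
    have hsplit1 : ⟪ξ n, xhat - x n⟫_ℝ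
        = ⟪ξ n, x (n + 1) - x n⟫_ℝ + ⟪ξ n, xhat - x (n + 1)⟫_ℝ := by
      rw [← inner_add_right]; congr 1; abel
    have hsplit2 : ⟪w, xhat - x (n + 1)⟫_ℝ
        = ⟪w, xhat - x n⟫_ℝ + ⟪w, x n - x (n + 1)⟫_ℝ := by
      rw [← inner_add_right]; congr 1; abel
    have hcs2 : t n * ⟪w, x n - x (n + 1)⟫_ℝ ≤ t n * (‖w‖ * ‖x n - x (n + 1)‖) :=
      mul_le_mul_of_nonneg_left (real_inner_le_norm _ _) ht0
    have hnrev : ‖x n - x (n + 1)‖ = ‖x (n + 1) - x n‖ := norm_sub_rev _ _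
    -- Young: t‖w‖‖x-x₊‖ ≤ t²‖w‖²/(4c₀) + c₀‖x-x₊‖²
    have hyoung : t n * (‖w‖ * ‖x (n + 1) - x n‖)
        ≤ t n ^ 2 * ‖w‖ ^ 2 / (4 * c₀) + c₀ * ‖x (n + 1) - x n‖ ^ 2 := by
      rw [← sub_nonneg]
      have hcne : c₀ ≠ 0 := ne_of_gt hc₀
      have expand : t n ^ 2 * ‖w‖ ^ 2 / (4 * c₀) + c₀ * ‖x (n + 1) - x n‖ ^ 2
          - t n * (‖w‖ * ‖x (n + 1) - x n‖)
          = (t n * ‖w‖ - 2 * c₀ * ‖x (n + 1) - x n‖) ^ 2 / (4 * c₀) := by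
        field_simp; ring
      rw [expand]; positivity
    have hnum : t n ^ 2 * ‖w‖ ^ 2 ≤ t n * (μ₀ * ‖B n r‖ ^ 2) := by
      calc t n ^ 2 * ‖w‖ ^ 2 = t n * (t n * ‖w‖ ^ 2) := by ring
        _ ≤ t n * (μ₀ * ‖B n r‖ ^ 2) := mul_le_mul_of_nonneg_left htw ht0
    have ht2w : t n ^ 2 * ‖w‖ ^ 2 / (4 * c₀) ≤ t n * (μ₀ * ‖B n r‖ ^ 2) / (4 * c₀) :=
      (div_le_div_iff_of_pos_right (by linarith : (0:ℝ) < 4 * c₀)).mpr hnum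
    have hnoiset : t n * ⟪w, xhat - x n⟫_ℝ ≤ t n * (‖B n r‖ ^ 2 / τ - ‖B n r‖ ^ 2) := by
      apply mul_le_mul_of_nonneg_left _ ht0
      rw [hwxhat]; linarith [hnoiseBr]
    -- combine everything
    rw [hnrev] at hcs2
    have hmul : t n * ⟪w, xhat - x (n + 1)⟫_ℝ
        = t n * ⟪w, xhat - x n⟫_ℝ + t n * ⟪w, x n - x (n + 1)⟫_ℝ := by
      rw [hsplit2]; ring
    have hτne : τ ≠ 0 := ne_of_gt hτ0
    have hcne : c₀ ≠ 0 := ne_of_gt hc₀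
    have heq : t n * (‖B n r‖ ^ 2 / τ - ‖B n r‖ ^ 2)
        + t n * (μ₀ * ‖B n r‖ ^ 2) / (4 * c₀)
        + (1 - 1 / τ - μ₀ / (4 * c₀)) * t n * ‖B n r‖ ^ 2 = 0 := by
      field_simp; ring
    linarith [hgrow, hinner1, hsplit1, hmul, hcs2, hyoung, ht2w, hnoiset, heq]
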